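/- If (A_n) is a Markov sequence of events with P(A_n) → 0, then P(limsup A_n) = 0 if ∑_{n=1}^∞ P(A_n^c ∩ A_{n+1}) < ∞, and P(limsup A_n) = 1 if ∑_{n=1}^∞ P(A_n^c ∩ A_{n+1}) = ∞. -/

import Mathlib

open MeasureTheory Filter

/-- `A` is a Markov sequence of events: the indicators `1_{A n}` form a Markov chain.
Elementary formulation: conditionally on any cylinder event determined by
`A 0, …, A n` (each taken either as itself or its complement), the conditional
probability of `A (n+1)` depends only on the last coordinate. -/
def IsMarkovSeq {Ω : Type*} [MeasurableSpace Ω] (μ : Measure Ω) (A : ℕ → Set Ω) : Prop :=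
  ∀ n : ℕ, ∀ B : ℕ → Set Ω, (∀ i, i ≤ n → B i = A i ∨ B i = (A i)ᶜ) →
    μ (⋂ i ∈ Finset.range (n + 1), B i) ≠ 0 →
    μ (A (n + 1) ∩ ⋂ i ∈ Finset.range (n + 1), B i) * μ (B n)
      = μ (A (n + 1) ∩ B n) * μ (⋂ i ∈ Finset.range (n + 1), B i)

open Set
open scoped ENNReal Topology

set_option maxHeartbeats 1000000

lemma markov_key {Ω : Type*} [MeasurableSpace Ω] (μ : Measure Ω) [IsProbabilityMeasure μ]
    (A : ℕ → Set Ω) (hmeas : ∀ n, MeasurableSet (A n)) (hM : IsMarkovSeq μ A)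
    {m N : ℕ} (hmN : m ≤ N) :
    μ (A (N+1) ∩ ⋂ i ∈ Finset.Icc m N, (A i)ᶜ) * μ ((A N)ᶜ)
      = μ (A (N+1) ∩ (A N)ᶜ) * μ (⋂ i ∈ Finset.Icc m N, (A i)ᶜ) := by
  classical
  set D := ⋂ i ∈ Finset.Icc m N, (A i)ᶜ with hD
  set B : (Fin m → Bool) → ℕ → Set Ω := fun σ i =>
    if h : i < m then (if σ ⟨i, h⟩ then A i else (A i)ᶜ) else (A i)ᶜ with hB
  have hBor : ∀ σ i, B σ i = A i ∨ B σ i = (A i)ᶜ := by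
    intro σ i
    simp only [hB]
    split_ifs <;> simp
  have hBmeas : ∀ σ i, MeasurableSet (B σ i) := by
    intro σ i
    rcases hBor σ i with h | h <;> rw [h]
    exacts [hmeas i, (hmeas i).compl]
  set E : (Fin m → Bool) → Set Ω := fun σ => ⋂ i ∈ Finset.range m, B σ i with hE
  have hEmeas : ∀ σ, MeasurableSet (E σ) := fun σ =>
    MeasurableSet.biInter (Finset.range m).countable_toSet (fun i _ => hBmeas σ i)
  have hDmeas : MeasurableSet D :=
    MeasurableSet.biInter (Finset.Icc m N).countable_toSet (fun i _ => (hmeas i).compl)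
  have hsplit : Finset.range (N+1) = Finset.range m ∪ Finset.Icc m N := by
    ext x
    simp only [Finset.mem_union, Finset.mem_range, Finset.mem_Icc, Nat.lt_succ_iff]
    omega
  have hCE : ∀ σ, (⋂ i ∈ Finset.range (N+1), B σ i) = E σ ∩ D := by
    intro σ
    rw [hsplit]
    have : (⋂ i ∈ (Finset.range m ∪ Finset.Icc m N : Finset ℕ), B σ i)
        = (⋂ i ∈ Finset.range m, B σ i) ∩ ⋂ i ∈ Finset.Icc m N, B σ i := by
      ext ω
      simp only [Set.mem_iInter, Set.mem_inter_iff, Finset.mem_union]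
      constructor
      · intro h; exact ⟨fun i hi => h i (Or.inl hi), fun i hi => h i (Or.inr hi)⟩
      · rintro ⟨h1, h2⟩ i (hi | hi)
        exacts [h1 i hi, h2 i hi]
    rw [this]
    congr 1
    refine Set.iInter₂_congr fun i hi => ?_
    have hi' : ¬ i < m := by
      simp only [Finset.mem_Icc] at hi; omega
    simp [hB, hi']
  -- partition
  have hcover : ∀ T : Set Ω, MeasurableSet T → μ T = ∑ σ : Fin m → Bool, μ (T ∩ E σ) := by
    intro T hT
    have hunion : (⋃ σ : Fin m → Bool, T ∩ E σ) = T := by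
      apply Set.Subset.antisymm
      · exact Set.iUnion_subset fun σ => Set.inter_subset_left
      · intro ω hω
        refine Set.mem_iUnion.2 ⟨fun i => decide (ω ∈ A i), hω, ?_⟩
        simp only [hE, Set.mem_iInter]
        intro i hi
        simp only [hB, (Finset.mem_range.1 hi), dif_pos]
        by_cases h : ω ∈ A i
        · simp [h]
        · simp [h]
      
    have hdisj : Pairwise (Function.onFun Disjoint fun σ : Fin m → Bool => T ∩ E σ) := by
      intro σ τ hστ
      obtain ⟨i, hi⟩ : ∃ i, σ i ≠ τ i := by
        by_contra h
        push_neg at h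
        exact hστ (funext h)
      refine Set.disjoint_left.2 fun ω hω1 hω2 => ?_
      have h1 : ω ∈ B σ i := by
        have := hω1.2
        simp only [hE, Set.mem_iInter] at this
        exact this i (Finset.mem_range.2 i.isLt)
      have h2 : ω ∈ B τ i := by
        have := hω2.2
        simp only [hE, Set.mem_iInter] at this
        exact this i (Finset.mem_range.2 i.isLt)
      simp only [hB, i.isLt, dif_pos] at h1 h2
      rcases Bool.eq_false_or_eq_true (σ i) with hσ | hσ <;>
        rcases Bool.eq_false_or_eq_true (τ i) with hτ | hτ <;>
          first
            | (exact hi (hσ.trans hτ.symm))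
            | (rw [hσ] at h1; rw [hτ] at h2; simp at h1 h2;
               first | exact h2 h1 | exact h1 h2)
    calc μ T = μ (⋃ σ : Fin m → Bool, T ∩ E σ) := by rw [hunion]
      _ = ∑' σ : Fin m → Bool, μ (T ∩ E σ) :=
          measure_iUnion hdisj fun σ => hT.inter (hEmeas σ)
      _ = ∑ σ : Fin m → Bool, μ (T ∩ E σ) := tsum_fintype _
  have key : ∀ σ : Fin m → Bool,
      μ ((A (N+1) ∩ D) ∩ E σ) * μ ((A N)ᶜ) = μ (A (N+1) ∩ (A N)ᶜ) * μ (D ∩ E σ) := by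
    intro σ
    have hset : (A (N+1) ∩ D) ∩ E σ = A (N+1) ∩ (E σ ∩ D) := by
      rw [Set.inter_assoc, Set.inter_comm D]
    have hset2 : D ∩ E σ = E σ ∩ D := Set.inter_comm _ _
    rw [hset, hset2]
    by_cases hz : μ (E σ ∩ D) = 0
    · have h1 : μ (A (N+1) ∩ (E σ ∩ D)) = 0 :=
        measure_mono_null Set.inter_subset_right hz
      rw [h1, hz, zero_mul, mul_zero]
    · have hNm : ¬ N < m := Nat.not_lt.2 hmN
      have hBN : B σ N = (A N)ᶜ := by simp [hB, hNm]
      have := hM N (B σ) (fun i _ => hBor σ i) (by rw [hCE σ]; exact hz)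
      rw [hCE σ, hBN] at this
      exact this
  calc μ (A (N+1) ∩ D) * μ ((A N)ᶜ)
      = (∑ σ : Fin m → Bool, μ ((A (N+1) ∩ D) ∩ E σ)) * μ ((A N)ᶜ) := by
        rw [← hcover _ ((hmeas (N+1)).inter hDmeas)]
    _ = ∑ σ : Fin m → Bool, μ ((A (N+1) ∩ D) ∩ E σ) * μ ((A N)ᶜ) := Finset.sum_mul _ _ _
    _ = ∑ σ : Fin m → Bool, μ (A (N+1) ∩ (A N)ᶜ) * μ (D ∩ E σ) := by
        exact Finset.sum_congr rfl fun σ _ => key σ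
    _ = μ (A (N+1) ∩ (A N)ᶜ) * ∑ σ : Fin m → Bool, μ (D ∩ E σ) := by
        rw [Finset.mul_sum]
    _ = μ (A (N+1) ∩ (A N)ᶜ) * μ D := by rw [← hcover D hDmeas]

lemma aux_prod_le (c g : ℕ → ℝ≥0∞) (hstep : ∀ k, g (k+1) ≤ (1 - c k) * g k) (h0 : g 0 ≤ 1) :
    ∀ k, g k ≤ ∏ j ∈ Finset.range k, (1 - c j) := by
  intro k
  induction k with
  | zero => simpa using h0
  | succ k ih =>
    rw [Finset.prod_range_succ, mul_comm]
    exact (hstep k).trans (mul_le_mul_right ih _)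

lemma aux_prod_zero (c : ℕ → ℝ≥0∞) (hcne : ∀ n, c n ≠ ⊤) (htop : ∑' j, c j = ⊤)
    {x : ℝ≥0∞} (hx : ∀ k, x ≤ ∏ j ∈ Finset.range k, (1 - c j)) : x = 0 := by
  have hStop : Tendsto (fun k => ∑ j ∈ Finset.range k, c j) atTop (𝓝 ⊤) := by
    rw [← htop]
    exact ENNReal.tendsto_nat_tsum _
  have hSat : Tendsto (fun k => ∑ j ∈ Finset.range k, (c j).toReal) atTop atTop := by
    rw [tendsto_atTop]
    intro M
    rw [ENNReal.tendsto_nhds_top_iff_nnreal] at hStop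
    filter_upwards [hStop (Real.toNNReal M)] with k hk
    have hfin : ∑ j ∈ Finset.range k, c j ≠ ⊤ := ENNReal.sum_ne_top.2 fun j _ => hcne _
    have h2 : ((Real.toNNReal M : ℝ≥0∞)).toReal ≤ (∑ j ∈ Finset.range k, c j).toReal :=
      ENNReal.toReal_mono hfin hk.le
    rw [ENNReal.coe_toReal, ENNReal.toReal_sum (fun j _ => hcne _)] at h2
    calc M ≤ (Real.toNNReal M : ℝ) := Real.le_coe_toNNReal M
      _ ≤ _ := h2
  have hfactor : ∀ n, 1 - c n ≤ ENNReal.ofReal (Real.exp (-(c n).toReal)) := by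
    intro n
    have h1 : (1 : ℝ≥0∞) - c n = ENNReal.ofReal (1 - (c n).toReal) := by
      rw [ENNReal.ofReal_sub _ ENNReal.toReal_nonneg, ENNReal.ofReal_one,
        ENNReal.ofReal_toReal (hcne n)]
    rw [h1]
    apply ENNReal.ofReal_le_ofReal
    have := Real.add_one_le_exp (-(c n).toReal)
    linarith
  have hexp : ∀ k, (∏ j ∈ Finset.range k, (1 - c j))
      ≤ ENNReal.ofReal (Real.exp (-(∑ j ∈ Finset.range k, (c j).toReal))) := by
    intro k
    induction k with
    | zero => simp
    | succ k ih =>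
      calc (∏ j ∈ Finset.range (k+1), (1 - c j))
          = (∏ j ∈ Finset.range k, (1 - c j)) * (1 - c k) := Finset.prod_range_succ _ _
        _ ≤ ENNReal.ofReal (Real.exp (-(∑ j ∈ Finset.range k, (c j).toReal)))
              * ENNReal.ofReal (Real.exp (-(c k).toReal)) := mul_le_mul' ih (hfactor k)
        _ = ENNReal.ofReal (Real.exp (-(∑ j ∈ Finset.range k, (c j).toReal))
              * Real.exp (-(c k).toReal)) := (ENNReal.ofReal_mul (Real.exp_nonneg _)).symm
        _ = ENNReal.ofReal (Real.exp (-(∑ j ∈ Finset.range (k+1), (c j).toReal))) := by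
            rw [← Real.exp_add, Finset.sum_range_succ]
            ring_nf
  have htend : Tendsto
      (fun k => ENNReal.ofReal (Real.exp (-(∑ j ∈ Finset.range k, (c j).toReal))))
      atTop (𝓝 0) := by
    have h1 : Tendsto (fun k => Real.exp (-(∑ j ∈ Finset.range k, (c j).toReal))) atTop (𝓝 0) :=
      Real.tendsto_exp_atBot.comp (tendsto_neg_atTop_atBot.comp hSat)
    have h2 := ENNReal.tendsto_ofReal h1
    rwa [ENNReal.ofReal_zero] at h2
  exact le_antisymm (ge_of_tendsto' htend fun k => (hx k).trans (hexp k)) (zero_le)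

lemma tail_null {Ω : Type*} [MeasurableSpace Ω] (μ : Measure Ω) [IsProbabilityMeasure μ]
    (A : ℕ → Set Ω) (hmeas : ∀ n, MeasurableSet (A n))
    (hkey : ∀ {m N : ℕ}, m ≤ N →
      μ (A (N+1) ∩ ⋂ i ∈ Finset.Icc m N, (A i)ᶜ) * μ ((A N)ᶜ)
        = μ (A (N+1) ∩ (A N)ᶜ) * μ (⋂ i ∈ Finset.Icc m N, (A i)ᶜ))
    (hdiv : ∑' n, μ ((A n)ᶜ ∩ A (n + 1)) = ⊤) (m : ℕ) :
    μ (⋂ i, ⋂ (_ : m ≤ i), (A i)ᶜ) = 0 := by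
  classical
  have hc1 : ∀ n, μ ((A n)ᶜ ∩ A (n+1)) ≤ 1 := fun n => prob_le_one
  have hcne : ∀ n, μ ((A n)ᶜ ∩ A (n+1)) ≠ ⊤ := fun n => measure_ne_top μ _
  have hstep : ∀ k, μ (⋂ i ∈ Finset.Icc m (m+(k+1)), (A i)ᶜ)
      ≤ (1 - μ ((A (m+k))ᶜ ∩ A (m+k+1))) * μ (⋂ i ∈ Finset.Icc m (m+k), (A i)ᶜ) := by
    intro k
    have hIcc : Finset.Icc m (m + (k+1)) = insert (m+k+1) (Finset.Icc m (m+k)) := by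
      ext x
      simp only [Finset.mem_Icc, Finset.mem_insert]
      omega
    have hset : (⋂ i ∈ Finset.Icc m (m+(k+1)), (A i)ᶜ)
        = (⋂ i ∈ Finset.Icc m (m+k), (A i)ᶜ) \ A (m+k+1) := by
      rw [hIcc, Finset.set_biInter_insert, Set.inter_comm, Set.diff_eq]
    have h1 : μ ((A (m+k))ᶜ ∩ A (m+k+1)) * μ (⋂ i ∈ Finset.Icc m (m+k), (A i)ᶜ)
        ≤ μ ((⋂ i ∈ Finset.Icc m (m+k), (A i)ᶜ) ∩ A (m+k+1)) := by
      have hcomm : μ (A (m+k+1) ∩ (A (m+k))ᶜ) = μ ((A (m+k))ᶜ ∩ A (m+k+1)) := by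
        rw [Set.inter_comm]
      calc μ ((A (m+k))ᶜ ∩ A (m+k+1)) * μ (⋂ i ∈ Finset.Icc m (m+k), (A i)ᶜ)
          = μ (A (m+k+1) ∩ ⋂ i ∈ Finset.Icc m (m+k), (A i)ᶜ) * μ ((A (m+k))ᶜ) := by
            rw [hkey (Nat.le_add_right m k), hcomm]
        _ ≤ μ (A (m+k+1) ∩ ⋂ i ∈ Finset.Icc m (m+k), (A i)ᶜ) * 1 :=
            mul_le_mul_right prob_le_one _
        _ = μ ((⋂ i ∈ Finset.Icc m (m+k), (A i)ᶜ) ∩ A (m+k+1)) := by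
            rw [mul_one, Set.inter_comm]
    have h2 : μ ((⋂ i ∈ Finset.Icc m (m+k), (A i)ᶜ) \ A (m+k+1))
        = μ (⋂ i ∈ Finset.Icc m (m+k), (A i)ᶜ)
          - μ ((⋂ i ∈ Finset.Icc m (m+k), (A i)ᶜ) ∩ A (m+k+1)) := by
      refine ENNReal.eq_sub_of_add_eq (measure_ne_top μ _) ?_
      rw [add_comm]
      exact measure_inter_add_diff _ (hmeas (m+k+1))
    rw [hset, h2]
    calc μ (⋂ i ∈ Finset.Icc m (m+k), (A i)ᶜ)
          - μ ((⋂ i ∈ Finset.Icc m (m+k), (A i)ᶜ) ∩ A (m+k+1))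
        ≤ μ (⋂ i ∈ Finset.Icc m (m+k), (A i)ᶜ)
          - μ ((A (m+k))ᶜ ∩ A (m+k+1)) * μ (⋂ i ∈ Finset.Icc m (m+k), (A i)ᶜ) :=
          tsub_le_tsub_left h1 _
      _ = 1 * μ (⋂ i ∈ Finset.Icc m (m+k), (A i)ᶜ)
          - μ ((A (m+k))ᶜ ∩ A (m+k+1)) * μ (⋂ i ∈ Finset.Icc m (m+k), (A i)ᶜ) := by
          rw [one_mul]
      _ = (1 - μ ((A (m+k))ᶜ ∩ A (m+k+1))) * μ (⋂ i ∈ Finset.Icc m (m+k), (A i)ᶜ) :=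
          (ENNReal.sub_mul fun _ _ => measure_ne_top μ _).symm
  have hprod := aux_prod_le (fun j => μ ((A (m+j))ᶜ ∩ A (m+j+1)))
    (fun k => μ (⋂ i ∈ Finset.Icc m (m+k), (A i)ᶜ)) hstep prob_le_one
  have htop : ∑' j, μ ((A (m+j))ᶜ ∩ A (m+j+1)) = ⊤ := by
    have hfin : ∑ i ∈ Finset.range m, μ ((A i)ᶜ ∩ A (i+1)) ≠ ⊤ :=
      ENNReal.sum_ne_top.2 fun i _ => hcne i
    have h4 : ∀ n, ∑ i ∈ Finset.range n, μ ((A i)ᶜ ∩ A (i+1))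
        ≤ (∑ i ∈ Finset.range m, μ ((A i)ᶜ ∩ A (i+1))) + ∑' j, μ ((A (m+j))ᶜ ∩ A (m+j+1)) := by
      intro n
      calc ∑ i ∈ Finset.range n, μ ((A i)ᶜ ∩ A (i+1))
          ≤ ∑ i ∈ Finset.range (m+n), μ ((A i)ᶜ ∩ A (i+1)) :=
            Finset.sum_le_sum_of_subset (Finset.range_subset_range.2 (Nat.le_add_left n m))
        _ = (∑ i ∈ Finset.range m, μ ((A i)ᶜ ∩ A (i+1)))
            + ∑ j ∈ Finset.range n, μ ((A (m+j))ᶜ ∩ A (m+j+1)) := Finset.sum_range_add _ m n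
        _ ≤ _ := add_le_add_right (ENNReal.sum_le_tsum _) _
    have h5 : (⊤ : ℝ≥0∞) ≤ (∑ i ∈ Finset.range m, μ ((A i)ᶜ ∩ A (i+1)))
        + ∑' j, μ ((A (m+j))ᶜ ∩ A (m+j+1)) := by
      rw [← hdiv, ENNReal.tsum_eq_iSup_nat]
      exact iSup_le h4
    rcases ENNReal.add_eq_top.1 (top_le_iff.1 h5) with h | h
    · exact absurd h hfin
    · exact h
  refine aux_prod_zero _ (fun n => hcne _) htop fun k => ?_
  refine le_trans (measure_mono ?_) (hprod k)
  intro ω hω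
  simp only [Set.mem_iInter] at hω ⊢
  intro i hi
  exact hω i (Finset.mem_Icc.1 hi).1

private theorem stmt4_aux {Ω : Type*} [MeasurableSpace Ω] (μ : Measure Ω) [IsProbabilityMeasure μ]
    (A : ℕ → Set Ω) (hmeas : ∀ n, MeasurableSet (A n))
    (hkey : ∀ {m N : ℕ}, m ≤ N →
      μ (A (N+1) ∩ ⋂ i ∈ Finset.Icc m N, (A i)ᶜ) * μ ((A N)ᶜ)
        = μ (A (N+1) ∩ (A N)ᶜ) * μ (⋂ i ∈ Finset.Icc m N, (A i)ᶜ))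
    (htail : (∑' n, μ ((A n)ᶜ ∩ A (n + 1)) = ⊤) → ∀ m : ℕ,
      μ (⋂ i, ⋂ (_ : m ≤ i), (A i)ᶜ) = 0)
    (h0 : Tendsto (fun n => μ (A n)) atTop (nhds 0)) :
    (∑' n, μ ((A n)ᶜ ∩ A (n + 1)) ≠ ⊤ → μ (limsup A atTop) = 0) ∧
    (∑' n, μ ((A n)ᶜ ∩ A (n + 1)) = ⊤ → μ (limsup A atTop) = 1) := by
  constructor
  · -- convergent case
    intro hsum
    have hliminf : μ (liminf A atTop) = 0 := by
      have hsub : liminf A atTop ⊆ ⋃ m, ⋂ i, ⋂ (_ : m ≤ i), A i := by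
        rw [liminf_eq_iSup_iInf_of_nat]
        exact subset_rfl
      refine le_antisymm (le_trans (measure_mono hsub) ?_) (zero_le)
      refine le_trans (measure_iUnion_le _) ?_
      have : ∀ m : ℕ, μ (⋂ i, ⋂ (_ : m ≤ i), A i) = 0 := by
        intro m
        refine le_antisymm ?_ (zero_le)
        have hev : ∀ᶠ n in atTop, μ (⋂ i, ⋂ (_ : m ≤ i), A i) ≤ μ (A n) := by
          filter_upwards [eventually_ge_atTop m] with n hn
          exact measure_mono (Set.iInter₂_subset n hn)
        exact ge_of_tendsto h0 hev
      simp [this]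
    have hBC : μ (limsup (fun n => (A n)ᶜ ∩ A (n+1)) atTop) = 0 :=
      measure_limsup_atTop_eq_zero hsum
    have hsub : limsup A atTop ⊆
        limsup (fun n => (A n)ᶜ ∩ A (n+1)) atTop ∪ liminf A atTop := by
      intro ω hω
      by_cases hBCmem : ω ∈ limsup (fun n => (A n)ᶜ ∩ A (n+1)) atTop
      · exact Or.inl hBCmem
      · right
        rw [mem_limsup_iff_frequently_mem, frequently_atTop] at hω
        rw [mem_limsup_iff_frequently_mem] at hBCmem
        rw [Filter.not_frequently] at hBCmem
        rw [eventually_atTop] at hBCmem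
        obtain ⟨M, hM⟩ := hBCmem
        rw [mem_liminf_iff_eventually_mem, eventually_atTop]
        refine ⟨M, fun n hn => ?_⟩
        -- ω ∈ A k for some k ≥ n, and membership propagates down to n
        obtain ⟨k, hkn, hk⟩ := hω n
        -- first: for j ≥ M, ω ∈ A (j+1) → ω ∈ A j
        have hback : ∀ j, M ≤ j → ω ∈ A (j+1) → ω ∈ A j := by
          intro j hj hmem
          by_contra hnot
          exact hM j hj ⟨hnot, hmem⟩
        have hdown : ∀ d j, M ≤ j → ω ∈ A (j + d) → ω ∈ A j := by
          intro d
          induction d with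
          | zero => intro j _ h; exact h
          | succ d ih =>
            intro j hj h
            have : ω ∈ A ((j + d) + 1) := by
              have : j + (d+1) = (j + d) + 1 := by omega
              rwa [this] at h
            exact ih j hj (hback (j+d) (le_trans hj (Nat.le_add_right j d)) this)
        obtain ⟨d, hd⟩ : ∃ d, k = n + d := ⟨k - n, by omega⟩
        exact hdown d n hn (hd ▸ hk)
    refine le_antisymm ?_ (zero_le)
    calc μ (limsup A atTop)
        ≤ μ (limsup (fun n => (A n)ᶜ ∩ A (n+1)) atTop ∪ liminf A atTop) := measure_mono hsub
      _ ≤ μ (limsup (fun n => (A n)ᶜ ∩ A (n+1)) atTop) + μ (liminf A atTop) :=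
          measure_union_le _ _
      _ = 0 := by rw [hBC, hliminf, add_zero]

  · intro hdiv
    have hms : MeasurableSet (limsup A atTop) :=
      MeasurableSet.measurableSet_limsup fun n => hmeas n
    rw [← prob_compl_eq_zero_iff hms]
    have hcompl : (limsup A atTop)ᶜ = ⋃ m, ⋂ i, ⋂ (_ : m ≤ i), (A i)ᶜ := by
      rw [Filter.limsup_compl]
      rw [liminf_eq_iSup_iInf_of_nat]
      rfl
    rw [hcompl]
    refine le_antisymm (le_trans (measure_iUnion_le _) ?_) (zero_le)
    simp [htail hdiv]

theorem stmt4 {Ω : Type*} [MeasurableSpace Ω] (μ : Measure Ω) [IsProbabilityMeasure μ]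
    (A : ℕ → Set Ω) (hmeas : ∀ n, MeasurableSet (A n))
    (hMarkov : IsMarkovSeq μ A)
    (h0 : Tendsto (fun n => μ (A n)) atTop (nhds 0)) :
    (∑' n, μ ((A n)ᶜ ∩ A (n + 1)) ≠ ⊤ → μ (limsup A atTop) = 0) ∧
    (∑' n, μ ((A n)ᶜ ∩ A (n + 1)) = ⊤ → μ (limsup A atTop) = 1) :=
  stmt4_aux μ A hmeas (fun {m N} h => markov_key μ A hmeas hMarkov h)
    (fun hdiv m => tail_null μ A hmeas (fun {m N} h => markov_key μ A hmeas hMarkov h) hdiv m) h0
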